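/- Let n ≥ 1 and let k : ℝ × ℝⁿ → ℝ^{n×n} be smooth with k(r,s) a symmetric positive definite matrix, with entries k_{αβ}(r,s) and inverse entries k^{αβ}(r,s) (1 ≤ α,β ≤ n). On Ω = (0,∞) × ℝⁿ with coordinates z = (z⁰, z¹, …, zⁿ) = (r, s¹, …, sⁿ), define the metric components g₀₀ = 1/(4r²), g₀β = g_{β0} = 0, g_{αβ} = k_{αβ}(r,s)/r, let Γᵏᵢⱼ = ½ Σ_l gᵏˡ(∂ᵢ g_{jl} + ∂ⱼ g_{il} − ∂_l g_{ij}) be the associated Christoffel symbols (gᵏˡ the inverse matrix of g_{ij}), and set Γ̂ᵏᵢⱼ := Γᵏᵢⱼ + ½(vᵢ δᵏⱼ + vⱼ δᵏᵢ), where v₀ = 1/r and v_α = 0. Then for all r > 0: Γ̂⁰₀₀ = 0; Γ̂⁰₀β = Γ̂⁰_{β0} = 0; Γ̂⁰_{αβ} = 2(k_{αβ} − r ∂_r k_{αβ}); Γ̂^γ₀₀ = 0; Γ̂^γ₀β = Γ̂^γ_{β0} = ½ Σ_δ k^{γδ} ∂_r k_{δβ}; and Γ̂^γ_{αβ} = ½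 Σ_δ k^{γδ}(∂_α k_{βδ} + ∂_β k_{αδ} − ∂_δ k_{αβ}). In particular, all Γ̂ᵏᵢⱼ extend smoothly to r = 0. -/

import Mathlib

/-- The coordinate direction vectors in `ℝ × ℝⁿ`: index `0` is the `r`-direction,
index `α.succ` is the `s^α`-direction. -/
noncomputable def coordDir (n : ℕ) (i : Fin (n + 1)) : ℝ × (Fin n → ℝ) :=
  Fin.cases ((1 : ℝ), (0 : Fin n → ℝ)) (fun α => ((0 : ℝ), Pi.single α (1 : ℝ))) i

/-- Partial derivative `∂ᵢ F` of a scalar function on `ℝ × ℝⁿ`. -/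
noncomputable def pd (n : ℕ) (i : Fin (n + 1)) (F : ℝ × (Fin n → ℝ) → ℝ)
    (z : ℝ × (Fin n → ℝ)) : ℝ :=
  fderiv ℝ F z (coordDir n i)

/-- The components of the metric `g = dr²/(4r²) + k_r/r`:
`g₀₀ = 1/(4r²)`, `g₀β = g_{β0} = 0`, `g_{αβ} = k_{αβ}/r`. -/
noncomputable def gMet (n : ℕ) (k : ℝ × (Fin n → ℝ) → Fin n → Fin n → ℝ)
    (z : ℝ × (Fin n → ℝ)) : Fin (n + 1) → Fin (n + 1) → ℝ :=
  fun i => Fin.cases (motive := fun _ => Fin (n + 1) → ℝ)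
    (fun j => Fin.cases (1 / (4 * z.1 ^ 2)) (fun _ => (0 : ℝ)) j)
    (fun α j => Fin.cases (0 : ℝ) (fun β => k z α β / z.1) j) i

/-- Christoffel symbols `Γᵏᵢⱼ = ½ Σ_l gᵏˡ(∂ᵢ g_{jl} + ∂ⱼ g_{il} − ∂_l g_{ij})`
of the metric `gMet`. -/
noncomputable def christoffel (n : ℕ) (k : ℝ × (Fin n → ℝ) → Fin n → Fin n → ℝ)
    (z : ℝ × (Fin n → ℝ)) (a i j : Fin (n + 1)) : ℝ :=
  (1 / 2) * ∑ l : Fin (n + 1), ((Matrix.of (gMet n k z))⁻¹ a l) *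
    (pd n i (fun w => gMet n k w j l) z + pd n j (fun w => gMet n k w i l) z
      - pd n l (fun w => gMet n k w i j) z)

/-- The projectively changed connection
`Γ̂ᵏᵢⱼ = Γᵏᵢⱼ + ½(vᵢ δᵏⱼ + vⱼ δᵏᵢ)` with `v₀ = 1/r`, `v_α = 0`. -/
noncomputable def christoffelHat (n : ℕ) (k : ℝ × (Fin n → ℝ) → Fin n → Fin n → ℝ)
    (z : ℝ × (Fin n → ℝ)) (a i j : Fin (n + 1)) : ℝ :=
  christoffel n k z a i j +
    (1 / 2) * ((Fin.cases (1 / z.1) (fun _ => (0 : ℝ)) i) * (if a = j then 1 else 0) +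
      (Fin.cases (1 / z.1) (fun _ => (0 : ℝ)) j) * (if a = i then 1 else 0))

/- ------------------------------------------------------------------ -/
/- Auxiliary material. -/

namespace Stmt8Aux

variable {n : ℕ} {k : ℝ × (Fin n → ℝ) → Fin n → Fin n → ℝ} {z : ℝ × (Fin n → ℝ)}

@[simp] lemma coordDir_zero : coordDir n 0 = ((1 : ℝ), (0 : Fin n → ℝ)) := rfl

@[simp] lemma coordDir_succ (α : Fin n) :
    coordDir n α.succ = ((0 : ℝ), Pi.single α (1 : ℝ)) := by
  simp [coordDir]

@[simp] lemma coordDir_fst_zero : (coordDir n 0).1 = 1 := rfl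

@[simp] lemma coordDir_fst_succ (α : Fin n) : (coordDir n α.succ).1 = 0 := by
  simp [coordDir]

@[simp] lemma gMet_00 : gMet n k z 0 0 = 1 / (4 * z.1 ^ 2) := rfl

@[simp] lemma gMet_0s (β : Fin n) : gMet n k z 0 β.succ = 0 := by simp [gMet]

@[simp] lemma gMet_s0 (α : Fin n) : gMet n k z α.succ 0 = 0 := by simp [gMet]

@[simp] lemma gMet_ss (α β : Fin n) : gMet n k z α.succ β.succ = k z α β / z.1 := by
  simp [gMet]

/-- The explicit inverse metric. -/
noncomputable def gInv (n : ℕ) (k : ℝ × (Fin n → ℝ) → Fin n → Fin n → ℝ)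
    (z : ℝ × (Fin n → ℝ)) : Fin (n + 1) → Fin (n + 1) → ℝ :=
  fun i => Fin.cases (motive := fun _ => Fin (n + 1) → ℝ)
    (fun j => Fin.cases (4 * z.1 ^ 2) (fun _ => (0 : ℝ)) j)
    (fun α j => Fin.cases (0 : ℝ) (fun β => z.1 * (Matrix.of (k z))⁻¹ α β) j) i

@[simp] lemma gInv_00 : gInv n k z 0 0 = 4 * z.1 ^ 2 := rfl

@[simp] lemma gInv_0s (β : Fin n) : gInv n k z 0 β.succ = 0 := by simp [gInv]

@[simp] lemma gInv_s0 (α : Fin n) : gInv n k z α.succ 0 = 0 := by simp [gInv]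

@[simp] lemma gInv_ss (α β : Fin n) :
    gInv n k z α.succ β.succ = z.1 * (Matrix.of (k z))⁻¹ α β := by simp [gInv]

lemma ginv_eq (hz : z.1 ≠ 0) (hdet : IsUnit (Matrix.of (k z)).det) :
    (Matrix.of (gMet n k z))⁻¹ = Matrix.of (gInv n k z) := by
  refine Matrix.inv_eq_right_inv ?_
  have hkk : Matrix.of (k z) * (Matrix.of (k z))⁻¹ = 1 := Matrix.mul_nonsing_inv _ hdet
  ext i j
  rw [Matrix.mul_apply]
  induction i using Fin.cases with
  | zero =>
    induction j using Fin.cases with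
    | zero =>
      simp [Fin.sum_univ_succ, Matrix.one_apply]
      field_simp
    | succ β =>
      simp [Fin.sum_univ_succ, Matrix.one_apply, (Fin.succ_ne_zero β).symm]
  | succ α =>
    induction j using Fin.cases with
    | zero =>
      simp [Fin.sum_univ_succ, Matrix.one_apply, Fin.succ_ne_zero α]
    | succ β =>
      have := congrFun (congrFun hkk α) β
      rw [Matrix.mul_apply] at this
      simp only [Matrix.of_apply] at this
      simp only [Matrix.of_apply, Fin.sum_univ_succ, gMet_s0, zero_mul, gInv_ss, gMet_ss,
        gInv_s0, mul_zero, zero_add, Matrix.one_apply, Fin.succ_inj]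
      calc ∑ d : Fin n, k z α d / z.1 * (z.1 * (Matrix.of (k z))⁻¹ d β)
          = ∑ d : Fin n, k z α d * (Matrix.of (k z))⁻¹ d β := by
            refine Finset.sum_congr rfl fun d _ => ?_
            field_simp
        _ = if α = β then 1 else 0 := by rw [this, Matrix.one_apply]
        _ = _ := by simp [Matrix.one_apply]

lemma pd_const (i : Fin (n + 1)) (c : ℝ) : pd n i (fun _ => c) z = 0 := by
  simp [pd]

lemma pd_comp_fst {f : ℝ → ℝ} {f' : ℝ} (hf : HasDerivAt f f' z.1) (i : Fin (n + 1)) :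
    pd n i (fun w => f w.1) z = (coordDir n i).1 * f' := by
  have h : HasFDerivAt (fun w : ℝ × (Fin n → ℝ) => f w.1)
      ((ContinuousLinearMap.smulRight (1 : ℝ →L[ℝ] ℝ) f').comp
        (ContinuousLinearMap.fst ℝ ℝ (Fin n → ℝ))) z :=
    (hasDerivAt_iff_hasFDerivAt.1 hf).comp z hasFDerivAt_fst
  rw [pd, h.fderiv]
  simp [mul_comm]

lemma pd_g00 (hz : z.1 ≠ 0) (i : Fin (n + 1)) :
    pd n i (fun w => 1 / (4 * w.1 ^ 2)) z = (coordDir n i).1 * (-(1 / (2 * z.1 ^ 3))) := by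
  have h4 : (4 : ℝ) * z.1 ^ 2 ≠ 0 := by positivity
  have h2 := ((hasDerivAt_pow 2 z.1).const_mul (4 : ℝ)).inv h4
  have hder : HasDerivAt (fun r : ℝ => 1 / (4 * r ^ 2)) (-(1 / (2 * z.1 ^ 3))) z.1 := by
    have : (fun r : ℝ => 1 / (4 * r ^ 2)) = fun r : ℝ => (4 * r ^ 2)⁻¹ := by
      funext r; rw [one_div]
    rw [this]
    convert (show HasDerivAt (fun r : ℝ => (4 * r ^ 2)⁻¹) _ z.1 from h2) using 1
    field_simp
    ring
  exact pd_comp_fst hder i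

lemma pd_div_fst {F : ℝ × (Fin n → ℝ) → ℝ} (hF : DifferentiableAt ℝ F z) (hz : z.1 ≠ 0)
    (i : Fin (n + 1)) :
    pd n i (fun w => F w / w.1) z
      = (z.1 * pd n i F z - F z * (coordDir n i).1) / z.1 ^ 2 := by
  have hinv : HasFDerivAt (fun w : ℝ × (Fin n → ℝ) => (w.1)⁻¹)
      ((ContinuousLinearMap.smulRight (1 : ℝ →L[ℝ] ℝ) (-(z.1 ^ 2)⁻¹)).comp
        (ContinuousLinearMap.fst ℝ ℝ (Fin n → ℝ))) z :=
    (hasDerivAt_iff_hasFDerivAt.1 (hasDerivAt_inv hz)).comp z hasFDerivAt_fst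
  have h := hF.hasFDerivAt.mul hinv
  have heq : (fun w : ℝ × (Fin n → ℝ) => F w / w.1) = fun w => F w * (w.1)⁻¹ := by
    funext w; rw [div_eq_mul_inv]
  rw [heq, pd, HasFDerivAt.fderiv (f := fun w => F w * w.1⁻¹) h, pd]
  simp only [ContinuousLinearMap.add_apply, ContinuousLinearMap.smul_apply,
    ContinuousLinearMap.comp_apply, ContinuousLinearMap.smulRight_apply,
    ContinuousLinearMap.coe_fst', ContinuousLinearMap.one_apply, smul_eq_mul]
  field_simp
  ring

lemma hat_000 (hz : 0 < z.1) (hdet : IsUnit (Matrix.of (k z)).det) :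
    christoffelHat n k z 0 0 0 = 0 := by
  have hr := hz.ne'
  rw [christoffelHat, christoffel, ginv_eq hr hdet]
  simp only [Matrix.of_apply, Fin.sum_univ_succ, gInv_00, gInv_0s, gMet_00, gMet_0s, gMet_s0,
    gMet_ss, zero_mul, mul_zero, Finset.sum_const_zero, add_zero, Fin.cases_zero,
    pd_const, pd_g00 hr, coordDir_fst_zero, if_pos rfl]
  field_simp
  norm_num


lemma hat_00s (hz : 0 < z.1) (hdet : IsUnit (Matrix.of (k z)).det)
    (hdk : ∀ α β : Fin n, DifferentiableAt ℝ (fun w => k w α β) z)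
    (hksym : ∀ w, ∀ α β : Fin n, k w α β = k w β α) (β : Fin n) : christoffelHat n k z 0 0 β.succ = 0 := by
  have hr := hz.ne'
  rw [christoffelHat, christoffel, ginv_eq hr hdet]
  simp only [Matrix.of_apply, Fin.sum_univ_succ, gInv_00, gInv_0s, gInv_s0, gInv_ss,
    gMet_00, gMet_0s, gMet_s0, gMet_ss]
  simp only [pd_const, pd_g00 hr]
  simp only [coordDir_fst_zero, coordDir_fst_succ, Fin.cases_zero, Fin.cases_succ,
    zero_mul, mul_zero, zero_add, add_zero, sub_zero, zero_sub, mul_one,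
    Finset.sum_const_zero, neg_zero]
  simp [(Fin.succ_ne_zero β).symm]

lemma hat_0s0 (hz : 0 < z.1) (hdet : IsUnit (Matrix.of (k z)).det)
    (hdk : ∀ α β : Fin n, DifferentiableAt ℝ (fun w => k w α β) z)
    (hksym : ∀ w, ∀ α β : Fin n, k w α β = k w β α) (β : Fin n) : christoffelHat n k z 0 β.succ 0 = 0 := by
  have hr := hz.ne'
  rw [christoffelHat, christoffel, ginv_eq hr hdet]
  simp only [Matrix.of_apply, Fin.sum_univ_succ, gInv_00, gInv_0s, gInv_s0, gInv_ss,
    gMet_00, gMet_0s, gMet_s0, gMet_ss]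
  simp only [pd_const, pd_g00 hr]
  simp only [coordDir_fst_zero, coordDir_fst_succ, Fin.cases_zero, Fin.cases_succ,
    zero_mul, mul_zero, zero_add, add_zero, sub_zero, zero_sub, mul_one,
    Finset.sum_const_zero, neg_zero]
  simp [(Fin.succ_ne_zero β).symm]

lemma hat_0ss (hz : 0 < z.1) (hdet : IsUnit (Matrix.of (k z)).det)
    (hdk : ∀ α β : Fin n, DifferentiableAt ℝ (fun w => k w α β) z)
    (hksym : ∀ w, ∀ α β : Fin n, k w α β = k w β α) (α β : Fin n) : christoffelHat n k z 0 α.succ β.succ =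
    2 * (k z α β - z.1 * pd n 0 (fun w => k w α β) z) := by
  have hr := hz.ne'
  have hpddiv : ∀ (i : Fin (n+1)) (γ δ : Fin n), pd n i (fun w => k w γ δ / w.1) z
      = (z.1 * pd n i (fun w => k w γ δ) z - k z γ δ * (coordDir n i).1) / z.1 ^ 2 :=
    fun i γ δ => pd_div_fst (hdk γ δ) hr i
  rw [christoffelHat, christoffel, ginv_eq hr hdet]
  simp only [Matrix.of_apply, Fin.sum_univ_succ, gInv_00, gInv_0s, gInv_s0, gInv_ss,
    gMet_00, gMet_0s, gMet_s0, gMet_ss]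
  simp only [pd_const, pd_g00 hr, hpddiv]
  simp only [coordDir_fst_zero, coordDir_fst_succ, Fin.cases_zero, Fin.cases_succ,
    zero_mul, mul_zero, zero_add, add_zero, sub_zero, zero_sub, mul_one,
    Finset.sum_const_zero, neg_zero]
  simp [(Fin.succ_ne_zero α).symm, (Fin.succ_ne_zero β).symm]
  field_simp
  ring

lemma hat_s00 (hz : 0 < z.1) (hdet : IsUnit (Matrix.of (k z)).det)
    (hdk : ∀ α β : Fin n, DifferentiableAt ℝ (fun w => k w α β) z)
    (hksym : ∀ w, ∀ α β : Fin n, k w α β = k w β α) (c : Fin n) : christoffelHat n k z c.succ 0 0 = 0 := by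
  have hr := hz.ne'
  rw [christoffelHat, christoffel, ginv_eq hr hdet]
  simp only [Matrix.of_apply, Fin.sum_univ_succ, gInv_00, gInv_0s, gInv_s0, gInv_ss,
    gMet_00, gMet_0s, gMet_s0, gMet_ss]
  simp only [pd_const, pd_g00 hr]
  simp only [coordDir_fst_zero, coordDir_fst_succ, Fin.cases_zero, Fin.cases_succ,
    zero_mul, mul_zero, zero_add, add_zero, sub_zero, zero_sub, mul_one,
    Finset.sum_const_zero, neg_zero]
  simp [Fin.succ_ne_zero]

lemma hat_s0s (hz : 0 < z.1) (hdet : IsUnit (Matrix.of (k z)).det)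
    (hdk : ∀ α β : Fin n, DifferentiableAt ℝ (fun w => k w α β) z)
    (hksym : ∀ w, ∀ α β : Fin n, k w α β = k w β α) (c β : Fin n) : christoffelHat n k z c.succ 0 β.succ =
    (1 / 2) * ∑ d : Fin n, (Matrix.of (k z))⁻¹ c d * pd n 0 (fun w => k w d β) z := by
  have hr := hz.ne'
  have hpddiv : ∀ (i : Fin (n+1)) (γ δ : Fin n), pd n i (fun w => k w γ δ / w.1) z
      = (z.1 * pd n i (fun w => k w γ δ) z - k z γ δ * (coordDir n i).1) / z.1 ^ 2 :=
    fun i γ δ => pd_div_fst (hdk γ δ) hr i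
  have hpdsym : ∀ (i : Fin (n+1)) (γ δ : Fin n),
      pd n i (fun w => k w γ δ) z = pd n i (fun w => k w δ γ) z := fun i γ δ => by
    rw [show (fun w => k w γ δ) = fun w => k w δ γ from funext fun w => hksym w γ δ]
  have hKk : ∑ d : Fin n, (Matrix.of (k z))⁻¹ c d * k z d β = if c = β then 1 else 0 := by
    have h := congrFun (congrFun (Matrix.nonsing_inv_mul (Matrix.of (k z)) hdet) c) β
    rw [Matrix.mul_apply] at h
    simpa [Matrix.one_apply] using h
  rw [christoffelHat, christoffel, ginv_eq hr hdet]
  simp only [Matrix.of_apply, Fin.sum_univ_succ, gInv_00, gInv_0s, gInv_s0, gInv_ss,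
    gMet_00, gMet_0s, gMet_s0, gMet_ss]
  simp only [pd_const, pd_g00 hr, hpddiv]
  simp only [coordDir_fst_zero, coordDir_fst_succ, Fin.cases_zero, Fin.cases_succ,
    zero_mul, mul_zero, zero_add, add_zero, sub_zero, zero_sub, mul_one,
    Finset.sum_const_zero, neg_zero]
  have hite : (if c.succ = β.succ then (1:ℝ) else 0)
      = ∑ d : Fin n, (Matrix.of (k z))⁻¹ c d * k z d β := by
    rw [hKk]; simp [Fin.succ_inj]
  rw [hite]
  simp only [Finset.mul_sum]
  rw [← Finset.sum_add_distrib]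
  refine Finset.sum_congr rfl fun d _ => ?_
  rw [hpdsym 0 β d, hksym z β d]
  field_simp
  ring

lemma hat_ss0 (hz : 0 < z.1) (hdet : IsUnit (Matrix.of (k z)).det)
    (hdk : ∀ α β : Fin n, DifferentiableAt ℝ (fun w => k w α β) z)
    (hksym : ∀ w, ∀ α β : Fin n, k w α β = k w β α) (c β : Fin n) : christoffelHat n k z c.succ β.succ 0 =
    (1 / 2) * ∑ d : Fin n, (Matrix.of (k z))⁻¹ c d * pd n 0 (fun w => k w d β) z := by
  have hr := hz.ne'
  have hpddiv : ∀ (i : Fin (n+1)) (γ δ : Fin n), pd n i (fun w => k w γ δ / w.1) z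
      = (z.1 * pd n i (fun w => k w γ δ) z - k z γ δ * (coordDir n i).1) / z.1 ^ 2 :=
    fun i γ δ => pd_div_fst (hdk γ δ) hr i
  have hpdsym : ∀ (i : Fin (n+1)) (γ δ : Fin n),
      pd n i (fun w => k w γ δ) z = pd n i (fun w => k w δ γ) z := fun i γ δ => by
    rw [show (fun w => k w γ δ) = fun w => k w δ γ from funext fun w => hksym w γ δ]
  have hKk : ∑ d : Fin n, (Matrix.of (k z))⁻¹ c d * k z d β = if c = β then 1 else 0 := by
    have h := congrFun (congrFun (Matrix.nonsing_inv_mul (Matrix.of (k z)) hdet) c) β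
    rw [Matrix.mul_apply] at h
    simpa [Matrix.one_apply] using h
  rw [christoffelHat, christoffel, ginv_eq hr hdet]
  simp only [Matrix.of_apply, Fin.sum_univ_succ, gInv_00, gInv_0s, gInv_s0, gInv_ss,
    gMet_00, gMet_0s, gMet_s0, gMet_ss]
  simp only [pd_const, pd_g00 hr, hpddiv]
  simp only [coordDir_fst_zero, coordDir_fst_succ, Fin.cases_zero, Fin.cases_succ,
    zero_mul, mul_zero, zero_add, add_zero, sub_zero, zero_sub, mul_one,
    Finset.sum_const_zero, neg_zero]
  have hite : (if c.succ = β.succ then (1:ℝ) else 0)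
      = ∑ d : Fin n, (Matrix.of (k z))⁻¹ c d * k z d β := by
    rw [hKk]; simp [Fin.succ_inj]
  rw [hite]
  simp only [Finset.mul_sum]
  rw [← Finset.sum_add_distrib]
  refine Finset.sum_congr rfl fun d _ => ?_
  rw [hpdsym 0 β d, hksym z β d]
  field_simp
  ring

lemma hat_sss (hz : 0 < z.1) (hdet : IsUnit (Matrix.of (k z)).det)
    (hdk : ∀ α β : Fin n, DifferentiableAt ℝ (fun w => k w α β) z)
    (hksym : ∀ w, ∀ α β : Fin n, k w α β = k w β α) (c α β : Fin n) : christoffelHat n k z c.succ α.succ β.succ =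
    (1 / 2) * ∑ d : Fin n, (Matrix.of (k z))⁻¹ c d *
      (pd n α.succ (fun w => k w β d) z + pd n β.succ (fun w => k w α d) z
        - pd n d.succ (fun w => k w α β) z) := by
  have hr := hz.ne'
  have hpddiv : ∀ (i : Fin (n+1)) (γ δ : Fin n), pd n i (fun w => k w γ δ / w.1) z
      = (z.1 * pd n i (fun w => k w γ δ) z - k z γ δ * (coordDir n i).1) / z.1 ^ 2 :=
    fun i γ δ => pd_div_fst (hdk γ δ) hr i
  rw [christoffelHat, christoffel, ginv_eq hr hdet]
  simp only [Matrix.of_apply, Fin.sum_univ_succ, gInv_00, gInv_0s, gInv_s0, gInv_ss,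
    gMet_00, gMet_0s, gMet_s0, gMet_ss]
  simp only [pd_const, pd_g00 hr, hpddiv]
  simp only [coordDir_fst_zero, coordDir_fst_succ, Fin.cases_zero, Fin.cases_succ,
    zero_mul, mul_zero, zero_add, add_zero, sub_zero, zero_sub, mul_one,
    Finset.sum_const_zero, neg_zero]

  simp only [Finset.mul_sum]
  refine Finset.sum_congr rfl fun d _ => ?_
  field_simp

lemma contDiff_det' {m : ℕ} {M : (ℝ × (Fin n → ℝ)) → Matrix (Fin m) (Fin m) ℝ}
    (h : ∀ a b, ContDiff ℝ (⊤ : ℕ∞) fun z => M z a b) :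
    ContDiff ℝ (⊤ : ℕ∞) fun z => (M z).det := by
  simp only [Matrix.det_apply']
  exact ContDiff.sum fun σ _ => contDiff_const.mul (contDiff_prod fun i _ => h _ _)

end Stmt8Aux

open Stmt8Aux in
/-- For a smooth symmetric positive definite `k`, the connection
coefficients `Γ̂ᵏᵢⱼ` of the projective change of the Levi-Civita connection of
`g = dr²/(4r²) + k_r/r` by `v = dr/r` are given, for `r > 0`, by the explicit
formulas of the paper, and in particular extend smoothly to `r = 0`. -/
theorem stmt_8 (n : ℕ) (hn : 1 ≤ n)
    (k : ℝ × (Fin n → ℝ) → Fin n → Fin n → ℝ)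
    (hk : ∀ α β : Fin n, ContDiff ℝ (⊤ : ℕ∞) fun z => k z α β)
    (hksym : ∀ z, ∀ α β : Fin n, k z α β = k z β α)
    (hkpos : ∀ z, (Matrix.of (k z)).PosDef) :
    (∀ z : ℝ × (Fin n → ℝ), 0 < z.1 →
      (christoffelHat n k z 0 0 0 = 0) ∧
      (∀ β : Fin n, christoffelHat n k z 0 0 β.succ = 0 ∧
        christoffelHat n k z 0 β.succ 0 = 0) ∧
      (∀ α β : Fin n, christoffelHat n k z 0 α.succ β.succ =
        2 * (k z α β - z.1 * pd n 0 (fun w => k w α β) z)) ∧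
      (∀ c : Fin n, christoffelHat n k z c.succ 0 0 = 0) ∧
      (∀ c β : Fin n,
        christoffelHat n k z c.succ 0 β.succ =
          (1 / 2) * ∑ d : Fin n, (Matrix.of (k z))⁻¹ c d * pd n 0 (fun w => k w d β) z ∧
        christoffelHat n k z c.succ β.succ 0 =
          (1 / 2) * ∑ d : Fin n, (Matrix.of (k z))⁻¹ c d * pd n 0 (fun w => k w d β) z) ∧
      (∀ c α β : Fin n, christoffelHat n k z c.succ α.succ β.succ =
        (1 / 2) * ∑ d : Fin n, (Matrix.of (k z))⁻¹ c d *
          (pd n α.succ (fun w => k w β d) z + pd n β.succ (fun w => k w α d) z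
            - pd n d.succ (fun w => k w α β) z))) ∧
    ∃ Γext : (ℝ × (Fin n → ℝ)) → Fin (n + 1) → Fin (n + 1) → Fin (n + 1) → ℝ,
      (∀ a i j : Fin (n + 1), ContDiff ℝ (⊤ : ℕ∞) fun z => Γext z a i j) ∧
      ∀ z : ℝ × (Fin n → ℝ), 0 < z.1 →
        ∀ a i j : Fin (n + 1), Γext z a i j = christoffelHat n k z a i j := by
  have hdk : ∀ (z : ℝ × (Fin n → ℝ)) (α β : Fin n),
      DifferentiableAt ℝ (fun w => k w α β) z := fun z α β =>
    ((hk α β).differentiable (by simp)).differentiableAt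
  have hdet : ∀ z, IsUnit (Matrix.of (k z)).det := fun z => (hkpos z).det_pos.ne'.isUnit
  have hmain : ∀ z : ℝ × (Fin n → ℝ), 0 < z.1 →
      (christoffelHat n k z 0 0 0 = 0) ∧
      (∀ β : Fin n, christoffelHat n k z 0 0 β.succ = 0 ∧
        christoffelHat n k z 0 β.succ 0 = 0) ∧
      (∀ α β : Fin n, christoffelHat n k z 0 α.succ β.succ =
        2 * (k z α β - z.1 * pd n 0 (fun w => k w α β) z)) ∧
      (∀ c : Fin n, christoffelHat n k z c.succ 0 0 = 0) ∧
      (∀ c β : Fin n,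
        christoffelHat n k z c.succ 0 β.succ =
          (1 / 2) * ∑ d : Fin n, (Matrix.of (k z))⁻¹ c d * pd n 0 (fun w => k w d β) z ∧
        christoffelHat n k z c.succ β.succ 0 =
          (1 / 2) * ∑ d : Fin n, (Matrix.of (k z))⁻¹ c d * pd n 0 (fun w => k w d β) z) ∧
      (∀ c α β : Fin n, christoffelHat n k z c.succ α.succ β.succ =
        (1 / 2) * ∑ d : Fin n, (Matrix.of (k z))⁻¹ c d *
          (pd n α.succ (fun w => k w β d) z + pd n β.succ (fun w => k w α d) z
            - pd n d.succ (fun w => k w α β) z)) := by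
    intro z hz
    exact ⟨hat_000 hz (hdet z),
      fun β => ⟨hat_00s hz (hdet z) (hdk z) hksym β, hat_0s0 hz (hdet z) (hdk z) hksym β⟩,
      fun α β => hat_0ss hz (hdet z) (hdk z) hksym α β,
      fun c => hat_s00 hz (hdet z) (hdk z) hksym c,
      fun c β => ⟨hat_s0s hz (hdet z) (hdk z) hksym c β, hat_ss0 hz (hdet z) (hdk z) hksym c β⟩,
      fun c α β => hat_sss hz (hdet z) (hdk z) hksym c α β⟩
  refine ⟨hmain, ?_⟩
  -- smoothness infrastructure
  have hpd : ∀ (i : Fin (n + 1)) (α β : Fin n),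
      ContDiff ℝ (⊤ : ℕ∞) fun z => pd n i (fun w => k w α β) z := by
    intro i α β
    have h1 : ContDiff ℝ (⊤ : ℕ∞) fun z => fderiv ℝ (fun w => k w α β) z :=
      (hk α β).fderiv_right le_rfl
    simp only [pd]
    exact h1.clm_apply contDiff_const
  have hdetCD : ContDiff ℝ (⊤ : ℕ∞) fun z => (Matrix.of (k z)).det :=
    Stmt8Aux.contDiff_det' fun a b => hk a b
  have hadj : ∀ c d : Fin n, ContDiff ℝ (⊤ : ℕ∞) fun z => (Matrix.of (k z)).adjugate c d := by
    intro c d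
    simp only [Matrix.adjugate_apply]
    refine Stmt8Aux.contDiff_det' fun a b => ?_
    simp only [Matrix.updateRow_apply]
    by_cases hab : a = d
    · simp only [hab, if_pos]
      exact contDiff_const
    · simpa [hab] using hk a b
  have hKinv : ∀ c d : Fin n, ContDiff ℝ (⊤ : ℕ∞) fun z => (Matrix.of (k z))⁻¹ c d := by
    intro c d
    have heq : (fun z => (Matrix.of (k z))⁻¹ c d)
        = fun z => (Matrix.of (k z)).adjugate c d / (Matrix.of (k z)).det := by
      funext z
      rw [Matrix.inv_def, Ring.inverse_eq_inv']
      simp [div_eq_inv_mul]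
    rw [heq]
    exact (hadj c d).div hdetCD fun z => (hkpos z).det_pos.ne'
  refine ⟨fun z a i j =>
    Fin.cases (motive := fun _ => ℝ)
      (Fin.cases (motive := fun _ => ℝ)
        (0 : ℝ)
        (fun α => Fin.cases (motive := fun _ => ℝ) (0 : ℝ)
          (fun β => 2 * (k z α β - z.1 * pd n 0 (fun w => k w α β) z)) j) i)
      (fun c => Fin.cases (motive := fun _ => ℝ)
        (Fin.cases (motive := fun _ => ℝ) (0 : ℝ)
          (fun β => (1 / 2) * ∑ d : Fin n, (Matrix.of (k z))⁻¹ c d *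
            pd n 0 (fun w => k w d β) z) j)
        (fun α => Fin.cases (motive := fun _ => ℝ)
          ((1 / 2) * ∑ d : Fin n, (Matrix.of (k z))⁻¹ c d * pd n 0 (fun w => k w d α) z)
          (fun β => (1 / 2) * ∑ d : Fin n, (Matrix.of (k z))⁻¹ c d *
            (pd n α.succ (fun w => k w β d) z + pd n β.succ (fun w => k w α d) z
              - pd n d.succ (fun w => k w α β) z)) j) i) a, ?_, ?_⟩
  · -- smoothness
    intro a i j
    induction a using Fin.cases with
    | zero =>
      induction i using Fin.cases with
      | zero => simpa using contDiff_const
      | succ α =>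
        induction j using Fin.cases with
        | zero => simpa using contDiff_const
        | succ β =>
          simp only [Fin.cases_zero, Fin.cases_succ]
          exact contDiff_const.mul ((hk α β).sub (contDiff_fst.mul (hpd 0 α β)))
    | succ c =>
      induction i using Fin.cases with
      | zero =>
        induction j using Fin.cases with
        | zero => simpa using contDiff_const
        | succ β =>
          simp only [Fin.cases_zero, Fin.cases_succ]
          exact contDiff_const.mul (ContDiff.sum fun d _ => (hKinv c d).mul (hpd 0 d β))
      | succ α =>
        induction j using Fin.cases with
        | zero =>
          simp only [Fin.cases_zero, Fin.cases_succ]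
          exact contDiff_const.mul (ContDiff.sum fun d _ => (hKinv c d).mul (hpd 0 d α))
        | succ β =>
          simp only [Fin.cases_zero, Fin.cases_succ]
          exact contDiff_const.mul (ContDiff.sum fun d _ => (hKinv c d).mul
            (((hpd α.succ β d).add (hpd β.succ α d)).sub (hpd d.succ α β)))
  · -- agreement with christoffelHat for r > 0
    intro z hz a i j
    obtain ⟨h1, h2, h3, h4, h5, h6⟩ := hmain z hz
    induction a using Fin.cases with
    | zero =>
      induction i using Fin.cases with
      | zero =>
        induction j using Fin.cases with
        | zero => simpa using h1.symm
        | succ β => simpa using ((h2 β).1).symm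
      | succ α =>
        induction j using Fin.cases with
        | zero => simpa using ((h2 α).2).symm
        | succ β => simpa using (h3 α β).symm
    | succ c =>
      induction i using Fin.cases with
      | zero =>
        induction j using Fin.cases with
        | zero => simpa using (h4 c).symm
        | succ β => simpa using ((h5 c β).1).symm
      | succ α =>
        induction j using Fin.cases with
        | zero => simpa using ((h5 c α).2).symm
        | succ β => simpa using (h6 c α β).symm
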